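/- If $z \in \mathbb{C}^4$ has phase difference $\phi_z = 0$ (i.e., $\arg z_1 + \arg z_4 = \arg z_2 + \arg z_3$ mod $2\pi$, with all entries nonzero, or equivalently $z_1 z_4 \overline{z_2 z_3}$ is a nonnegative real), then $\|z\|_{\mathsf{X}} = |z_1| + |z_2| + |z_3| + |z_4|$. -/

import Mathlib

open Complex Real

noncomputable def Xfun (z : Fin 4 → ℂ) (σ : ℝ) : ℝ :=
  ‖z 0 * Complex.exp (σ * Complex.I) + (starRingEnd ℂ) (z 3)‖ +
  ‖z 1 * Complex.exp (σ * Complex.I) + (starRingEnd ℂ) (z 2)‖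

noncomputable def Xnorm (z : Fin 4 → ℂ) : ℝ := ⨆ σ : ℝ, Xfun z σ

noncomputable def phase (z : Fin 4 → ℂ) : ℝ :=
  (Complex.arg (z 0) + Complex.arg (z 3)) - (Complex.arg (z 1) + Complex.arg (z 2))

lemma lemA (w₁ w₂ c : ℂ) (hc : ‖c‖ = 1)
    (h : ∃ s : ℝ, 0 ≤ s ∧ w₁ * w₂ * c = s) :
    ‖w₁ * c + (starRingEnd ℂ) w₂‖ = ‖w₁‖ + ‖w₂‖ := by
  obtain ⟨s, hs, hsc⟩ := h
  by_cases hw₂ : w₂ = 0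
  · simp [hw₂, norm_mul, hc]
  · have h1 : w₁ * c = (s : ℂ) / w₂ := by
      field_simp
      linear_combination hsc
    have h2 : w₁ * c + (starRingEnd ℂ) w₂ = ((s : ℂ) + ((‖w₂‖ : ℝ) : ℂ) ^ 2) / w₂ := by
      rw [h1]
      field_simp
      rw [show (((‖w₂‖ : ℝ) : ℂ)) ^ 2 = (Complex.normSq w₂ : ℂ) by
        rw [← Complex.sq_norm]; push_cast; ring, ← Complex.mul_conj]
    have habs1 : ‖w₁‖ = s / ‖w₂‖ := by
      have : ‖w₁ * c‖ = ‖(s : ℂ) / w₂‖ := by rw [h1]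
      rw [norm_mul, hc, mul_one, norm_div, Complex.norm_real, Real.norm_eq_abs, _root_.abs_of_nonneg hs] at this
      exact this
    rw [h2, norm_div, habs1]
    have hw₂' : ‖w₂‖ ≠ 0 := by simpa using hw₂
    have : ‖(s : ℂ) + ((‖w₂‖ : ℝ) : ℂ) ^ 2‖ = s + ‖w₂‖ ^ 2 := by
      rw [show ((s : ℂ) + ((‖w₂‖ : ℝ) : ℂ) ^ 2) = ((s + ‖w₂‖ ^ 2 : ℝ) : ℂ) by
        push_cast; ring]
      rw [Complex.norm_real, Real.norm_eq_abs, _root_.abs_of_nonneg (by positivity)]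
    rw [this]
    field_simp

theorem stmt_7 (z : Fin 4 → ℂ)
    (h : ∃ r : ℝ, 0 ≤ r ∧ z 0 * z 3 * (starRingEnd ℂ) (z 1) * (starRingEnd ℂ) (z 2) = r) :
    Xnorm z = ∑ i : Fin 4, ‖z i‖ := by
  obtain ⟨r, hr, hrc⟩ := h
  set S := ∑ i : Fin 4, ‖z i‖ with hS
  have hSval : S = ‖z 0‖ + ‖z 1‖ + ‖z 2‖
      + ‖z 3‖ := by
    rw [hS, Fin.sum_univ_four]
  -- upper bound
  have hub : ∀ σ : ℝ, Xfun z σ ≤ S := by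
    intro σ
    have he : ‖Complex.exp (σ * Complex.I)‖ = 1 := by
      simpa using Complex.norm_exp_ofReal_mul_I σ
    unfold Xfun
    rw [hSval]
    have h1 : ‖z 0 * Complex.exp (σ * Complex.I) + (starRingEnd ℂ) (z 3)‖
        ≤ ‖z 0‖ + ‖z 3‖ := by
      calc _ ≤ ‖z 0 * Complex.exp (σ * Complex.I)‖
              + ‖(starRingEnd ℂ) (z 3)‖ := norm_add_le _ _
        _ = ‖z 0‖ + ‖z 3‖ := by rw [norm_mul, he, mul_one,
              Complex.norm_conj]
    have h2 : ‖z 1 * Complex.exp (σ * Complex.I) + (starRingEnd ℂ) (z 2)‖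
        ≤ ‖z 1‖ + ‖z 2‖ := by
      calc _ ≤ ‖z 1 * Complex.exp (σ * Complex.I)‖
              + ‖(starRingEnd ℂ) (z 2)‖ := norm_add_le _ _
        _ = ‖z 1‖ + ‖z 2‖ := by rw [norm_mul, he, mul_one,
              Complex.norm_conj]
    linarith
  -- find a good c
  set w : ℂ := z 0 * z 3 with hw
  set u : ℂ := z 1 * z 2 with hu
  have hru : w * (starRingEnd ℂ) u = r := by
    rw [hu, map_mul]; linear_combination hrc
  obtain ⟨c, hc1, hwc, huc⟩ : ∃ c : ℂ, ‖c‖ = 1 ∧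
      (∃ s : ℝ, 0 ≤ s ∧ w * c = s) ∧ (∃ s : ℝ, 0 ≤ s ∧ u * c = s) := by
    by_cases hw0 : w = 0
    · by_cases hu0 : u = 0
      · exact ⟨1, by simp, ⟨0, le_refl 0, by simp [hw0]⟩, ⟨0, le_refl 0, by simp [hu0]⟩⟩
      · refine ⟨(starRingEnd ℂ) u / ((‖u‖ : ℝ) : ℂ), ?_, ⟨0, le_refl 0, by simp [hw0]⟩,
          ⟨‖u‖, norm_nonneg u, ?_⟩⟩
        · rw [norm_div, Complex.norm_conj, Complex.norm_real, Real.norm_eq_abs,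
            _root_.abs_of_nonneg (norm_nonneg u), div_self (by simpa using hu0)]
        · rw [mul_div_assoc', Complex.mul_conj, Complex.normSq_eq_norm_sq, Complex.ofReal_pow]
          have hu' : ((‖u‖ : ℝ) : ℂ) ≠ 0 := by simpa using hu0
          field_simp
    · refine ⟨(starRingEnd ℂ) w / ((‖w‖ : ℝ) : ℂ), ?_, ⟨‖w‖, norm_nonneg w, ?_⟩,
        ⟨r / ‖w‖, div_nonneg hr (norm_nonneg w), ?_⟩⟩
      · rw [norm_div, Complex.norm_conj, Complex.norm_real, Real.norm_eq_abs,
          _root_.abs_of_nonneg (norm_nonneg w), div_self (by simpa using hw0)]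
      · rw [mul_div_assoc', Complex.mul_conj, Complex.normSq_eq_norm_sq, Complex.ofReal_pow]
        have hw' : ((‖w‖ : ℝ) : ℂ) ≠ 0 := by simpa using hw0
        field_simp
      · have hw' : ((‖w‖ : ℝ) : ℂ) ≠ 0 := by simpa using hw0
        rw [mul_div_assoc']
        push_cast
        rw [div_eq_div_iff hw' hw']
        have : u * (starRingEnd ℂ) w = (r : ℂ) := by
          have := congrArg (starRingEnd ℂ) hru
          rw [map_mul, Complex.conj_conj, Complex.conj_ofReal] at this
          linear_combination this
        linear_combination ((‖w‖ : ℝ) : ℂ) * this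
  -- witness σ
  set σ₀ := Complex.arg c with hσ₀
  have hcσ : Complex.exp (σ₀ * Complex.I) = c := by
    have := Complex.norm_mul_exp_arg_mul_I c
    rwa [hc1, Complex.ofReal_one, one_mul] at this
  have hlow : Xfun z σ₀ = S := by
    unfold Xfun
    rw [hcσ, hSval]
    have e1 := lemA (z 0) (z 3) c hc1 (by rwa [← hw])
    have e2 := lemA (z 1) (z 2) c hc1 (by rwa [← hu])
    rw [e1, e2]; ring
  have hbdd : BddAbove (Set.range (Xfun z)) := ⟨S, by rintro x ⟨σ, rfl⟩; exact hub σ⟩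
  refine le_antisymm (ciSup_le hub) ?_
  rw [← hlow]
  exact le_ciSup hbdd σ₀
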